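/- For every integer n ≥ 1, a₆(n) = 0 if and only if n is not a sum of two squares, i.e. ∑_{d | n, d odd, d > 0} ξ(2n/d − d) = 0 if and only if there exist no integers x, y with x² + y² = n. -/

import Mathlib

/-- `ξ m` for odd `m`, determined by the residue of `m` modulo 12. -/
def xi (m : ℤ) : ℤ :=
  if m % 12 = 1 ∨ m % 12 = 5 then -1
  else if m % 12 = 3 then -2
  else if m % 12 = 7 ∨ m % 12 = 11 then 1
  else if m % 12 = 9 then 2
  else 0

/-- `a₆ n = ∑ ξ(2n/d − d)` over odd positive divisors `d` of `n`. -/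
def a6 (n : ℕ) : ℤ :=
  ∑ d ∈ n.divisors.filter (fun d => Odd d), xi (2 * ((n : ℤ) / (d : ℤ)) - (d : ℤ))

def c4 (x : ZMod 4) : ℤ := if x = 1 then 1 else if x = 3 then -1 else 0
def tt3 (x : ZMod 3) : ℤ := if x = 0 then -2 else 1

lemma xi_eq (x : ℤ) (hx : x % 2 = 1) :
    xi x = - (c4 (x : ZMod 4) * tt3 (x : ZMod 3)) := by
  obtain ⟨q, r, hqr, hr⟩ : ∃ q r, x = 12 * q + r ∧
      (r = 1 ∨ r = 3 ∨ r = 5 ∨ r = 7 ∨ r = 9 ∨ r = 11) :=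
    ⟨x / 12, x % 12, by omega, by omega⟩
  subst hqr
  have e4 : ∀ r : ℤ, ((12 * q + r : ℤ) : ZMod 4) = (r : ZMod 4) := by
    intro r; push_cast
    simp [show (12 : ZMod 4) = 0 by decide]
  have e3 : ∀ r : ℤ, ((12 * q + r : ℤ) : ZMod 3) = (r : ZMod 3) := by
    intro r; push_cast
    simp [show (12 : ZMod 3) = 0 by decide]
  have em : ∀ r : ℤ, (12 * q + r) % 12 = r % 12 := by intro r; omega
  rcases hr with rfl|rfl|rfl|rfl|rfl|rfl <;>
    rw [e4, e3] <;> norm_num [xi, em, c4, tt3] <;> decide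

def Sf (e : ZMod 3) (m : ℕ) : ℤ :=
  ∑ d ∈ m.divisors, c4 (d : ZMod 4) * tt3 (e * ((m / d : ℕ) : ZMod 3) - (d : ZMod 3))

lemma c4_sign : (∀ u v : ZMod 4, c4 (2 * (2 * u + 1) - (2 * v + 1)) = c4 (2 * v + 1)) ∧
    (∀ v : ZMod 4, c4 (-(2 * v + 1)) = -c4 (2 * v + 1)) := by decide

lemma xi_term (a N D : ℕ) (hN : Odd N) (hD : Odd D) :
    xi (2 ^ (a + 1) * (N : ℤ) - (D : ℤ)) =
      -((if a = 0 then (1:ℤ) else -1) * c4 (D : ZMod 4) *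
        tt3 ((2 : ZMod 3) ^ (a + 1) * (N : ZMod 3) - (D : ZMod 3))) := by
  obtain ⟨l, hl⟩ := hD
  obtain ⟨j, hj⟩ := hN
  have hx : (2 ^ (a + 1) * (N : ℤ) - (D : ℤ)) % 2 = 1 := by
    obtain ⟨t, ht⟩ : ∃ t : ℤ, 2 ^ (a + 1) * (N : ℤ) = 2 * t := ⟨2 ^ a * N, by ring⟩
    rw [ht]; subst hl; push_cast; omega
  rw [xi_eq _ hx]
  have e3 : ((2 ^ (a + 1) * (N : ℤ) - (D : ℤ) : ℤ) : ZMod 3)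
      = (2 : ZMod 3) ^ (a + 1) * (N : ZMod 3) - (D : ZMod 3) := by push_cast; ring
  have e4 : c4 ((2 ^ (a + 1) * (N : ℤ) - (D : ℤ) : ℤ) : ZMod 4)
      = (if a = 0 then (1:ℤ) else -1) * c4 (D : ZMod 4) := by
    have hcast : ((2 ^ (a + 1) * (N : ℤ) - (D : ℤ) : ℤ) : ZMod 4)
        = (2 : ZMod 4) ^ (a + 1) * (N : ZMod 4) - (D : ZMod 4) := by push_cast; ring
    rw [hcast]
    have hD4 : (D : ZMod 4) = 2 * (l : ZMod 4) + 1 := by subst hl; push_cast; ring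
    have hN4 : (N : ZMod 4) = 2 * (j : ZMod 4) + 1 := by subst hj; push_cast; ring
    rcases Nat.eq_zero_or_pos a with ha | ha
    · subst ha
      rw [hD4, hN4]
      simpa using c4_sign.1 (j : ZMod 4) (l : ZMod 4)
    · obtain ⟨b, rfl⟩ : ∃ b, a = b + 1 := ⟨a - 1, by omega⟩
      have h40 : (2 : ZMod 4) ^ (b + 1 + 1) = 0 := by
        rw [pow_succ, pow_succ]
        rw [mul_assoc, show (2 : ZMod 4) * 2 = 0 by decide, mul_zero]
      rw [h40, zero_mul, zero_sub, hD4]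
      simpa using c4_sign.2 (l : ZMod 4)
  rw [e3, e4]
  try ring

lemma odd_divisors (n : ℕ) (hn : n ≠ 0) :
    n.divisors.filter (fun d => Odd d) = (ordCompl[2] n).divisors := by
  ext d
  have hm : 2 ^ n.factorization 2 * ordCompl[2] n = n := Nat.ordProj_mul_ordCompl_eq_self n 2
  have hmodd : ¬ 2 ∣ ordCompl[2] n := Nat.not_dvd_ordCompl Nat.prime_two hn
  simp only [Finset.mem_filter, Nat.mem_divisors]
  constructor
  · rintro ⟨⟨hd, -⟩, hodd⟩
    refine ⟨?_, (Nat.ordCompl_pos 2 hn).ne'⟩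
    have h2d : ¬ 2 ∣ d := by rcases hodd with ⟨t, rfl⟩; omega
    have hcop : Nat.Coprime d (2 ^ n.factorization 2) :=
      Nat.Coprime.pow_right _ ((Nat.Prime.coprime_iff_not_dvd Nat.prime_two).mpr h2d).symm
    refine hcop.dvd_of_dvd_mul_left ?_
    rw [hm]; exact hd
  · rintro ⟨hd, -⟩
    refine ⟨⟨hd.trans (Nat.ordCompl_dvd n 2), hn⟩, ?_⟩
    have h2d : ¬ 2 ∣ d := fun h => hmodd (h.trans hd)
    exact Nat.odd_iff.mpr (by omega)

lemma a6_eq (n : ℕ) (hn : n ≠ 0) :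
    a6 n = -((if n.factorization 2 = 0 then (1:ℤ) else -1) *
      Sf ((2 : ZMod 3) ^ (n.factorization 2 + 1)) (ordCompl[2] n)) := by
  set a := n.factorization 2 with ha
  set m := ordCompl[2] n with hmdef
  have hm : 2 ^ a * m = n := Nat.ordProj_mul_ordCompl_eq_self n 2
  have hmodd : ¬ 2 ∣ m := Nat.not_dvd_ordCompl Nat.prime_two hn
  rw [a6, odd_divisors n hn, Sf, ← hmdef, Finset.mul_sum, ← Finset.sum_neg_distrib]
  refine Finset.sum_congr rfl fun d hd => ?_
  rw [Nat.mem_divisors] at hd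
  have hdm : d ∣ m := hd.1
  have hdodd : Odd d := by
    have h2d : ¬ 2 ∣ d := fun h => hmodd (h.trans hdm)
    exact Nat.odd_iff.mpr (by omega)
  have hNodd : Odd (m / d) := by
    have h2d : ¬ 2 ∣ (m / d) := fun h => hmodd (h.trans (Nat.div_dvd_of_dvd hdm))
    exact Nat.odd_iff.mpr (by omega)
  have hnd : (n : ℤ) / (d : ℤ) = ((n / d : ℕ) : ℤ) := (Int.natCast_div n d).symm
  have hdiv : n / d = 2 ^ a * (m / d) := by rw [← hm, Nat.mul_div_assoc _ hdm]
  have hcast : ((2 ^ a * (m / d) : ℕ) : ℤ) = 2 ^ a * ((m / d : ℕ) : ℤ) := by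
    rw [Nat.cast_mul, Nat.cast_pow]; norm_num
  have hkey : 2 * ((2:ℤ) ^ a * ((m / d : ℕ) : ℤ)) - (d:ℤ)
      = 2 ^ (a + 1) * ((m / d : ℕ) : ℤ) - d := by ring
  rw [hnd, hdiv, hcast, hkey, xi_term a (m / d) d hNodd hdodd]
  ring

def c3 (x : ZMod 3) : ℤ := if x = 0 then 0 else if x = 1 then 1 else -1

lemma c4_mul : ∀ x y : ZMod 4, c4 (x * y) = c4 x * c4 y := by decide
lemma c3_mul : ∀ x y : ZMod 3, c3 (x * y) = c3 x * c3 y := by decide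

lemma c4_pow (x : ZMod 4) (i : ℕ) : c4 (x ^ i) = c4 x ^ i := by
  induction i with
  | zero => simp [c4]
  | succ j ih => rw [pow_succ, pow_succ, c4_mul, ih]

def Rf (k : ℕ) : ℤ := ∑ d ∈ k.divisors, c4 (d : ZMod 4)
def Bf (k : ℕ) : ℤ :=
  ∑ d ∈ k.divisors, c4 (d : ZMod 4) * c3 (d : ZMod 3) * c3 ((k / d : ℕ) : ZMod 3)

lemma tt3_point : ∀ e u v : ZMod 3, e ≠ 0 → u ≠ 0 → v ≠ 0 →
    2 * tt3 (e * v - u) = -1 - 3 * (c3 e * c3 u * c3 v) := by decide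

lemma S_case0 (k : ℕ) (hk : ¬ 3 ∣ k) (hk0 : k ≠ 0) (e : ZMod 3) (he : e ≠ 0) :
    2 * Sf e k = -(Rf k + 3 * c3 e * Bf k) := by
  have key : ∀ d ∈ k.divisors,
      2 * (c4 (d : ZMod 4) * tt3 (e * ((k / d : ℕ) : ZMod 3) - (d : ZMod 3)))
        = -(c4 (d : ZMod 4)) + (-(3 * c3 e)) *
            (c4 (d : ZMod 4) * c3 (d : ZMod 3) * c3 ((k / d : ℕ) : ZMod 3)) := by
    intro d hd
    rw [Nat.mem_divisors] at hd
    have hu : ((d : ℕ) : ZMod 3) ≠ 0 := by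
      rw [Ne, ZMod.natCast_eq_zero_iff]
      exact fun h => hk (h.trans hd.1)
    have hv : (((k / d : ℕ)) : ZMod 3) ≠ 0 := by
      rw [Ne, ZMod.natCast_eq_zero_iff]
      exact fun h => hk (h.trans (Nat.div_dvd_of_dvd hd.1))
    calc 2 * (c4 (d : ZMod 4) * tt3 (e * ((k / d : ℕ) : ZMod 3) - (d : ZMod 3)))
        = c4 (d : ZMod 4) * (2 * tt3 (e * ((k / d : ℕ) : ZMod 3) - (d : ZMod 3))) := by ring
      _ = c4 (d : ZMod 4) * (-1 - 3 * (c3 e * c3 (d : ZMod 3) * c3 ((k / d : ℕ) : ZMod 3))) := by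
          rw [tt3_point e _ _ he hu hv]
      _ = _ := by ring
  rw [Sf, Finset.mul_sum, Finset.sum_congr rfl key, Finset.sum_add_distrib,
    Finset.sum_neg_distrib, ← Finset.mul_sum, ← Rf, ← Bf]
  ring

lemma gcd_mul_self_left {x y A B : ℕ} (h : Nat.Coprime A B) (hx : x ∣ A) (hy : y ∣ B) :
    Nat.gcd (x * y) A = x := by
  apply Nat.dvd_antisymm
  · have h1 : Nat.gcd (x * y) A ∣ x * y := Nat.gcd_dvd_left _ _
    have h2 : Nat.Coprime (Nat.gcd (x * y) A) y :=
      Nat.Coprime.coprime_dvd_right hy (Nat.Coprime.coprime_dvd_left (Nat.gcd_dvd_right _ _) h)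
    exact (Nat.Coprime.dvd_of_dvd_mul_right h2 h1)
  · exact Nat.dvd_gcd (Dvd.intro y rfl) hx

lemma sum_divisors_coprime_mul {A B : ℕ} (h : Nat.Coprime A B) (hA : A ≠ 0) (hB : B ≠ 0)
    (F : ℕ → ℕ → ℤ) :
    ∑ d ∈ (A * B).divisors, F d ((A * B) / d)
      = ∑ x ∈ A.divisors, ∑ y ∈ B.divisors, F (x * y) ((A / x) * (B / y)) := by
  rw [← Finset.sum_product']
  apply Finset.sum_nbij' (i := fun d => (Nat.gcd d A, Nat.gcd d B))
      (j := fun p => p.1 * p.2)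
  · intro d hd
    simp only [Nat.mem_divisors] at hd
    simp only [Finset.mem_product, Nat.mem_divisors]
    exact ⟨⟨Nat.gcd_dvd_right _ _, hA⟩, ⟨Nat.gcd_dvd_right _ _, hB⟩⟩
  · intro p hp
    simp only [Finset.mem_product, Nat.mem_divisors] at hp
    simp only [Nat.mem_divisors]
    exact ⟨mul_dvd_mul hp.1.1 hp.2.1, mul_ne_zero hA hB⟩
  · intro d hd
    simp only [Nat.mem_divisors] at hd
    have key : Nat.gcd d (A * B) = Nat.gcd d A * Nat.gcd d B := Nat.Coprime.gcd_mul d h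
    rw [← key, Nat.gcd_eq_left hd.1]
  · intro p hp
    simp only [Finset.mem_product, Nat.mem_divisors] at hp
    ext <;> simp only
    · exact gcd_mul_self_left h hp.1.1 hp.2.1
    · rw [mul_comm]; exact gcd_mul_self_left h.symm hp.2.1 hp.1.1
  · intro d hd
    simp only [Nat.mem_divisors] at hd
    have key : d = Nat.gcd d A * Nat.gcd d B := by
      rw [← Nat.Coprime.gcd_mul d h, Nat.gcd_eq_left hd.1]
    have h2 : (A * B) / d = (A / Nat.gcd d A) * (B / Nat.gcd d B) := by
      rw [Nat.div_mul_div_comm (Nat.gcd_dvd_right _ _) (Nat.gcd_dvd_right _ _), ← key]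
    rw [h2, ← key]

lemma Gval (b : ℕ) (hb : 1 ≤ b) :
    ∑ i ∈ Finset.range (b + 1), ((-1 : ℤ) ^ i * (if i = 0 ∨ i = b then 1 else -2))
      = if Even b then 4 else 0 := by
  have hsplit : ∀ i ∈ Finset.range (b + 1),
      ((-1 : ℤ) ^ i * (if i = 0 ∨ i = b then 1 else -2))
        = (-1 : ℤ) ^ i * (-2) + ((if i = 0 then 3 else 0) + (if i = b then 3 * (-1:ℤ) ^ b else 0)) := by
    intro i hi
    by_cases h0 : i = 0
    · subst h0
      rw [if_pos (Or.inl rfl), if_pos rfl, if_neg (by omega)]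
      norm_num
    · by_cases hb' : i = b
      · subst hb'
        rw [if_pos (Or.inr rfl), if_neg h0, if_pos rfl]
        ring
      · rw [if_neg (by tauto), if_neg h0, if_neg hb']
        ring
  rw [Finset.sum_congr rfl hsplit, Finset.sum_add_distrib, Finset.sum_add_distrib,
    ← Finset.sum_mul, neg_one_geom_sum, Finset.sum_ite_eq' (Finset.range (b+1)) 0 (fun _ => (3:ℤ)),
    Finset.sum_ite_eq' (Finset.range (b+1)) b (fun _ => 3 * (-1:ℤ) ^ b)]
  rw [if_pos (Finset.mem_range.mpr (by omega)), if_pos (Finset.mem_range.mpr (by omega))]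
  rcases Nat.even_or_odd b with he | ho
  · have h1 : ¬ Even (b + 1) := by simp [Nat.even_add_one, he]
    rw [if_pos he, if_neg h1, he.neg_one_pow]
    ring
  · have hno : ¬ Even b := Nat.not_even_iff_odd.mpr ho
    rw [if_neg hno, if_pos (Nat.even_add_one.mpr hno), ho.neg_one_pow]
    ring

lemma tt3_a : ∀ e u v : ZMod 3, u ≠ 0 → tt3 (e * ((0:ZMod 3) * v) - 1 * u) = 1 := by decide
lemma tt3_b : ∀ e u v : ZMod 3, e ≠ 0 → v ≠ 0 → tt3 (e * ((1:ZMod 3) * v) - 0 * u) = 1 := by decide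
lemma tt3_c : ∀ e u v : ZMod 3, tt3 (e * ((0:ZMod 3) * v) - 0 * u) = -2 := by decide

lemma S_pos (b k : ℕ) (hb : 1 ≤ b) (hk : ¬ 3 ∣ k) (hk0 : k ≠ 0) (e : ZMod 3) (he : e ≠ 0) :
    Sf e (3 ^ b * k) = (if Even b then 4 else 0) * Rf k := by
  have h3 : Nat.Coprime (3 ^ b) k :=
    Nat.Coprime.pow_left _ ((Nat.Prime.coprime_iff_not_dvd Nat.prime_three).mpr hk)
  have hA : (3:ℕ) ^ b ≠ 0 := by positivity
  rw [Sf]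
  rw [sum_divisors_coprime_mul h3 hA hk0
    (fun d w => c4 (d : ZMod 4) * tt3 (e * ((w : ℕ) : ZMod 3) - (d : ZMod 3)))]
  rw [Nat.sum_divisors_prime_pow Nat.prime_three]
  have inner : ∀ i ∈ Finset.range (b + 1),
      (∑ y ∈ k.divisors, c4 ((3 ^ i * y : ℕ) : ZMod 4) *
        tt3 (e * (((3 ^ b / 3 ^ i) * (k / y) : ℕ) : ZMod 3) - ((3 ^ i * y : ℕ) : ZMod 3)))
      = ((-1:ℤ) ^ i * (if i = 0 ∨ i = b then 1 else -2)) * Rf k := by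
    intro i hi
    rw [Finset.mem_range] at hi
    have hib : i ≤ b := by omega
    have hpd : (3:ℕ) ^ b / 3 ^ i = 3 ^ (b - i) := Nat.pow_div hib (by norm_num)
    have hy : ∀ y ∈ k.divisors, c4 ((3 ^ i * y : ℕ) : ZMod 4) *
        tt3 (e * (((3 ^ b / 3 ^ i) * (k / y) : ℕ) : ZMod 3) - ((3 ^ i * y : ℕ) : ZMod 3))
        = ((-1:ℤ) ^ i * (if i = 0 ∨ i = b then 1 else -2)) * c4 (y : ZMod 4) := by
      intro y hyd
      rw [Nat.mem_divisors] at hyd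
      have hu : ((y : ℕ) : ZMod 3) ≠ 0 := by
        rw [Ne, ZMod.natCast_eq_zero_iff]
        exact fun h => hk (h.trans hyd.1)
      have hv : (((k / y : ℕ)) : ZMod 3) ≠ 0 := by
        rw [Ne, ZMod.natCast_eq_zero_iff]
        exact fun h => hk (h.trans (Nat.div_dvd_of_dvd hyd.1))
      have hc4 : c4 ((3 ^ i * y : ℕ) : ZMod 4) = (-1:ℤ) ^ i * c4 (y : ZMod 4) := by
        have hcast : ((3 ^ i * y : ℕ) : ZMod 4) = (3 : ZMod 4) ^ i * (y : ZMod 4) := by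
          push_cast; ring
        rw [hcast, c4_mul, c4_pow, show c4 (3 : ZMod 4) = -1 from by decide]
      have h1 : (((3 ^ b / 3 ^ i) * (k / y) : ℕ) : ZMod 3)
          = (0 : ZMod 3) ^ (b - i) * ((k / y : ℕ) : ZMod 3) := by
        rw [hpd]; push_cast
        rw [show ((3 : ZMod 3)) = 0 from by decide]
      have h2 : ((3 ^ i * y : ℕ) : ZMod 3) = (0 : ZMod 3) ^ i * ((y : ℕ) : ZMod 3) := by
        push_cast
        rw [show ((3 : ZMod 3)) = 0 from by decide]
      rw [h1, h2, hc4]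
      by_cases h0 : i = 0
      · subst h0
        rw [Nat.sub_zero, zero_pow (show b ≠ 0 by omega), pow_zero, pow_zero,
          if_pos (Or.inl rfl), tt3_a e _ _ hu]
        ring
      · by_cases hbb : i = b
        · subst hbb
          rw [Nat.sub_self, pow_zero, zero_pow h0, if_pos (Or.inr rfl),
            tt3_b e _ _ he hv]
          ring
        · rw [zero_pow (show b - i ≠ 0 by omega), zero_pow h0, if_neg (by tauto),
            tt3_c e _ _]
          ring
    rw [Finset.sum_congr rfl hy, ← Finset.mul_sum, ← Rf]
  rw [Finset.sum_congr rfl inner, ← Finset.sum_mul, Gval b hb]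

lemma Rf_mul {u v : ℕ} (h : Nat.Coprime u v) (hu : u ≠ 0) (hv : v ≠ 0) :
    Rf (u * v) = Rf u * Rf v := by
  rw [show Rf (u*v) = ∑ d ∈ (u*v).divisors, c4 (d : ZMod 4) from rfl,
    sum_divisors_coprime_mul h hu hv (fun d _ => c4 (d : ZMod 4)),
    show Rf u = ∑ d ∈ u.divisors, c4 (d : ZMod 4) from rfl,
    show Rf v = ∑ d ∈ v.divisors, c4 (d : ZMod 4) from rfl, Finset.sum_mul_sum]
  refine Finset.sum_congr rfl fun x hx => Finset.sum_congr rfl fun y hy => ?_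
  rw [Nat.cast_mul, c4_mul]

lemma Bf_mul {u v : ℕ} (h : Nat.Coprime u v) (hu : u ≠ 0) (hv : v ≠ 0) :
    Bf (u * v) = Bf u * Bf v := by
  rw [Bf, sum_divisors_coprime_mul h hu hv
    (fun d w => c4 (d : ZMod 4) * c3 (d : ZMod 3) * c3 ((w : ℕ) : ZMod 3)),
    show Bf u = ∑ d ∈ u.divisors, c4 (d : ZMod 4) * c3 (d : ZMod 3) * c3 ((u / d : ℕ) : ZMod 3)
      from rfl,
    show Bf v = ∑ d ∈ v.divisors, c4 (d : ZMod 4) * c3 (d : ZMod 3) * c3 ((v / d : ℕ) : ZMod 3)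
      from rfl, Finset.sum_mul_sum]
  refine Finset.sum_congr rfl fun x hx => Finset.sum_congr rfl fun y hy => ?_
  rw [Nat.cast_mul, Nat.cast_mul, Nat.cast_mul, c4_mul, c3_mul, c3_mul]
  ring

lemma c3_pow (x : ZMod 3) (i : ℕ) : c3 (x ^ i) = c3 x ^ i := by
  induction i with
  | zero => simp [c3]
  | succ j ih => rw [pow_succ, pow_succ, c3_mul, ih]

lemma c3_unit : ∀ z : ZMod 3, z ≠ 0 → c3 z = 1 ∨ c3 z = -1 := by decide

lemma RB_prime_pow (p n : ℕ) (hp : p.Prime) (hn : 0 < n) (hp2 : p ≠ 2) (hp3 : p ≠ 3) :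
    0 ≤ Rf (p ^ n) ∧ (Bf (p ^ n) = Rf (p ^ n) ∨ Bf (p ^ n) = -Rf (p ^ n)) ∧
      (Rf (p ^ n) ≠ 0 ↔ ∀ q : ℕ, q.Prime → q % 4 = 3 → Even ((p ^ n).factorization q)) := by
  have hodd : p % 2 = 1 := Nat.odd_iff.mp (hp.odd_of_ne_two hp2)
  have h4 : p % 4 = 1 ∨ p % 4 = 3 := by omega
  have h3d : ¬ 3 ∣ p := fun h => hp3 ((Nat.prime_dvd_prime_iff_eq Nat.prime_three hp).mp h).symm
  have hp3' : ((p : ℕ) : ZMod 3) ≠ 0 := by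
    rw [Ne, ZMod.natCast_eq_zero_iff]; exact h3d
  have hc3 : c3 ((p : ℕ) : ZMod 3) = 1 ∨ c3 ((p : ℕ) : ZMod 3) = -1 := c3_unit _ hp3'
  have hR : Rf (p ^ n) = ∑ i ∈ Finset.range (n + 1), (c4 ((p : ℕ) : ZMod 4)) ^ i := by
    rw [show Rf (p ^ n) = ∑ d ∈ (p ^ n).divisors, c4 (d : ZMod 4) from rfl,
      Nat.sum_divisors_prime_pow hp]
    exact Finset.sum_congr rfl fun i _ => by rw [Nat.cast_pow, c4_pow]
  have hB : Bf (p ^ n) = (c3 ((p : ℕ) : ZMod 3)) ^ n * Rf (p ^ n) := by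
    rw [show Bf (p ^ n)
        = ∑ d ∈ (p ^ n).divisors, c4 (d : ZMod 4) * c3 (d : ZMod 3) * c3 ((p ^ n / d : ℕ) : ZMod 3)
        from rfl, Nat.sum_divisors_prime_pow hp, hR, Finset.mul_sum]
    refine Finset.sum_congr rfl fun i hi => ?_
    rw [Finset.mem_range] at hi
    rw [Nat.pow_div (by omega) hp.pos, Nat.cast_pow, Nat.cast_pow, Nat.cast_pow,
      c4_pow, c3_pow, c3_pow]
    have : c3 ((p : ℕ) : ZMod 3) ^ i * c3 ((p : ℕ) : ZMod 3) ^ (n - i)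
        = c3 ((p : ℕ) : ZMod 3) ^ n := by
      rw [← pow_add]; congr 1; omega
    calc c4 ((p:ℕ) : ZMod 4) ^ i * c3 ((p:ℕ) : ZMod 3) ^ i * c3 ((p:ℕ) : ZMod 3) ^ (n - i)
        = (c3 ((p:ℕ) : ZMod 3) ^ i * c3 ((p:ℕ) : ZMod 3) ^ (n - i)) * c4 ((p:ℕ) : ZMod 4) ^ i := by
          ring
      _ = c3 ((p:ℕ) : ZMod 3) ^ n * c4 ((p:ℕ) : ZMod 4) ^ i := by rw [this]
  have hBpm : Bf (p ^ n) = Rf (p ^ n) ∨ Bf (p ^ n) = -Rf (p ^ n) := by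
    rcases hc3 with h | h
    · left; rw [hB, h, one_pow, one_mul]
    · rcases Nat.even_or_odd n with he | ho
      · left; rw [hB, h, he.neg_one_pow, one_mul]
      · right; rw [hB, h, ho.neg_one_pow, neg_one_mul]
  have hfact : ∀ q : ℕ, (p ^ n).factorization q = if q = p then n else 0 := by
    intro q
    rw [Nat.Prime.factorization_pow hp, Finsupp.single_apply]
    simp [eq_comm]
  rcases h4 with h41 | h43
  · have hc4p : c4 ((p : ℕ) : ZMod 4) = 1 := by
      rw [← ZMod.natCast_mod p 4, h41]; decide
    have hRval : Rf (p ^ n) = (n : ℤ) + 1 := by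
      rw [hR, hc4p]; simp
    refine ⟨by rw [hRval]; positivity, hBpm, ?_⟩
    have hrhs : ∀ q : ℕ, q.Prime → q % 4 = 3 → Even ((p ^ n).factorization q) := by
      intro q hq hq4
      rw [hfact q]
      by_cases hqp : q = p
      · exfalso; rw [hqp] at hq4; omega
      · simp [hqp]
    exact iff_of_true (by rw [hRval]; positivity) hrhs
  · have hc4p : c4 ((p : ℕ) : ZMod 4) = -1 := by
      rw [← ZMod.natCast_mod p 4, h43]; decide
    have hRval : Rf (p ^ n) = if Even (n + 1) then 0 else 1 := by
      rw [hR, hc4p, neg_one_geom_sum]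
    rcases Nat.even_or_odd n with he | ho
    · have hne : ¬ Even (n + 1) := by simp [Nat.even_add_one, he]
      have hRv : Rf (p ^ n) = 1 := by rw [hRval, if_neg hne]
      refine ⟨by rw [hRv]; norm_num, hBpm, ?_⟩
      refine iff_of_true (by rw [hRv]; norm_num) ?_
      intro q hq hq4
      rw [hfact q]
      by_cases hqp : q = p
      · subst hqp; simpa using he
      · simp [hqp]
    · have hev : Even (n + 1) := by simp [Nat.even_add_one, Nat.not_even_iff_odd.mpr ho]
      have hRv : Rf (p ^ n) = 0 := by rw [hRval, if_pos hev]
      refine ⟨by rw [hRv], hBpm, ?_⟩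
      refine iff_of_false (by rw [hRv]; simp) ?_
      intro H
      have := H p hp h43
      rw [hfact p, if_pos rfl] at this
      exact (Nat.not_even_iff_odd.mpr ho) this

lemma RB (k : ℕ) : Nat.Coprime k 6 →
    0 ≤ Rf k ∧ (Bf k = Rf k ∨ Bf k = -Rf k) ∧
      (Rf k ≠ 0 ↔ ∀ q : ℕ, q.Prime → q % 4 = 3 → Even (k.factorization q)) := by
  induction k using Nat.recOnPosPrimePosCoprime with
  | prime_pow p n pp hn =>
    intro hcop
    have hp2 : p ≠ 2 := by
      rintro rfl
      have h2 : (2:ℕ) ∣ Nat.gcd (2 ^ n) 6 := Nat.dvd_gcd (dvd_pow_self 2 hn.ne') (by norm_num)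
      rw [Nat.Coprime] at hcop; omega
    have hp3 : p ≠ 3 := by
      rintro rfl
      have h2 : (3:ℕ) ∣ Nat.gcd (3 ^ n) 6 := Nat.dvd_gcd (dvd_pow_self 3 hn.ne') (by norm_num)
      rw [Nat.Coprime] at hcop; omega
    exact RB_prime_pow p n pp hn hp2 hp3
  | zero => intro h; rw [Nat.coprime_zero_left] at h; omega
  | one =>
    intro _
    refine ⟨?_, ?_, ?_⟩ <;>
      simp [Rf, Bf, Nat.divisors_one, show c4 (1 : ZMod 4) = 1 from by decide,
        show c3 (1 : ZMod 3) = 1 from by decide]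
  | coprime a b ha hb hab iha ihb =>
    intro hcop
    have hca : Nat.Coprime a 6 := Nat.Coprime.coprime_dvd_left (dvd_mul_right a b) hcop
    have hcb : Nat.Coprime b 6 := Nat.Coprime.coprime_dvd_left (dvd_mul_left b a) hcop
    obtain ⟨hRa, hBa, hia⟩ := iha hca
    obtain ⟨hRb, hBb, hib⟩ := ihb hcb
    have ha0 : a ≠ 0 := by omega
    have hb0 : b ≠ 0 := by omega
    rw [Rf_mul hab ha0 hb0, Bf_mul hab ha0 hb0]
    refine ⟨mul_nonneg hRa hRb, ?_, ?_⟩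
    · rcases hBa with h | h <;> rcases hBb with h' | h' <;> rw [h, h'] <;>
        [left; right; right; left] <;> ring
    · rw [mul_ne_zero_iff]
      constructor
      · rintro ⟨h1, h2⟩ q hq hq4
        rw [Nat.factorization_mul ha0 hb0, Finsupp.add_apply]
        exact (hia.mp h1 q hq hq4).add (hib.mp h2 q hq hq4)
      · intro H
        have key : ∀ q : ℕ, q.Prime → q % 4 = 3 →
            Even (a.factorization q) ∧ Even (b.factorization q) := by
          intro q hq hq4
          have hH := H q hq hq4
          rw [Nat.factorization_mul ha0 hb0, Finsupp.add_apply] at hH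
          by_cases hqa : q ∣ a
          · have hqb : ¬ q ∣ b := fun hd =>
              hq.ne_one ((Nat.Coprime.coprime_dvd_left hqa hab).eq_one_of_dvd hd)
            have fb : b.factorization q = 0 := Nat.factorization_eq_zero_of_not_dvd hqb
            rw [fb, add_zero] at hH
            exact ⟨hH, fb ▸ Even.zero⟩
          · have fa : a.factorization q = 0 := Nat.factorization_eq_zero_of_not_dvd hqa
            rw [fa, zero_add] at hH
            exact ⟨fa ▸ Even.zero, hH⟩
        exact ⟨hia.mpr fun q hq hq4 => (key q hq hq4).1,
          hib.mpr fun q hq hq4 => (key q hq hq4).2⟩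

lemma sq2_two (z : ℤ) : (∃ x y : ℤ, x ^ 2 + y ^ 2 = z) ↔ (∃ x y : ℤ, x ^ 2 + y ^ 2 = 2 * z) := by
  constructor
  · rintro ⟨x, y, h⟩
    exact ⟨x + y, x - y, by rw [← h]; ring⟩
  · rintro ⟨x, y, h⟩
    have hx2 : Even (x ^ 2) ↔ Even x := by simp [Int.even_pow]
    have hy2 : Even (y ^ 2) ↔ Even y := by simp [Int.even_pow]
    have h2 : Even (x ^ 2 + y ^ 2) := ⟨z, by linarith⟩
    have hxy : Even (x + y) := by
      rw [Int.even_add] at h2 ⊢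
      rw [hx2, hy2] at h2
      exact h2
    obtain ⟨u, hu⟩ := hxy
    have hxy' : Even (x - y) := ⟨u - y, by omega⟩
    obtain ⟨v, hv⟩ := hxy'
    refine ⟨u, v, ?_⟩
    have hxe : x = u + v := by omega
    have hye : y = u - v := by omega
    rw [hxe, hye] at h
    nlinarith [h]

lemma sq2_pow2 (a m : ℕ) :
    (∃ x y : ℤ, x ^ 2 + y ^ 2 = ((2 ^ a * m : ℕ) : ℤ)) ↔ (∃ x y : ℤ, x ^ 2 + y ^ 2 = (m : ℤ)) := by
  induction a with
  | zero => norm_num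
  | succ t ih =>
    have hc : ((2 ^ (t + 1) * m : ℕ) : ℤ) = 2 * ((2 ^ t * m : ℕ) : ℤ) := by push_cast; ring
    calc (∃ x y : ℤ, x ^ 2 + y ^ 2 = ((2 ^ (t+1) * m : ℕ) : ℤ))
        ↔ (∃ x y : ℤ, x ^ 2 + y ^ 2 = 2 * ((2 ^ t * m : ℕ) : ℤ)) := by rw [hc]
      _ ↔ (∃ x y : ℤ, x ^ 2 + y ^ 2 = ((2 ^ t * m : ℕ) : ℤ)) := (sq2_two _).symm
      _ ↔ _ := ih

lemma sq2_nat (m : ℕ) :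
    (∃ x y : ℤ, x ^ 2 + y ^ 2 = (m : ℤ)) ↔ (∃ x y : ℕ, m = x ^ 2 + y ^ 2) := by
  constructor
  · rintro ⟨x, y, h⟩
    refine ⟨x.natAbs, y.natAbs, ?_⟩
    have h1 : ((x.natAbs : ℤ)) ^ 2 = x ^ 2 := by rw [← Int.abs_eq_natAbs, sq_abs]
    have h2 : ((y.natAbs : ℤ)) ^ 2 = y ^ 2 := by rw [← Int.abs_eq_natAbs, sq_abs]
    have : ((x.natAbs ^ 2 + y.natAbs ^ 2 : ℕ) : ℤ) = (m : ℤ) := by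
      push_cast
      push_cast at h1 h2
      rw [h1, h2, h]
    exact (Nat.cast_inj.mp this).symm
  · rintro ⟨x, y, h⟩
    exact ⟨x, y, by rw [h]; push_cast; ring⟩

theorem a6_eq_zero_iff_not_sum_two_squares (n : ℕ) (hn : 1 ≤ n) :
    a6 n = 0 ↔ ¬ ∃ x y : ℤ, x ^ 2 + y ^ 2 = (n : ℤ) := by
  have hn0 : n ≠ 0 := by omega
  set a := n.factorization 2 with ha
  set m := ordCompl[2] n with hmdef
  have hm : 2 ^ a * m = n := Nat.ordProj_mul_ordCompl_eq_self n 2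
  have hm0 : m ≠ 0 := (Nat.ordCompl_pos 2 hn0).ne'
  have hm2 : ¬ 2 ∣ m := Nat.not_dvd_ordCompl Nat.prime_two hn0
  set b := m.factorization 3 with hb
  set K := ordCompl[3] m with hKdef
  have hmK : 3 ^ b * K = m := Nat.ordProj_mul_ordCompl_eq_self m 3
  have hK0 : K ≠ 0 := (Nat.ordCompl_pos 3 hm0).ne'
  have hK3 : ¬ 3 ∣ K := Nat.not_dvd_ordCompl Nat.prime_three hm0
  have hK2 : ¬ 2 ∣ K := fun h => hm2 (h.trans (Nat.ordCompl_dvd m 3))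
  have hK6 : Nat.Coprime K 6 := by
    have c2 : Nat.Coprime K 2 := ((Nat.Prime.coprime_iff_not_dvd Nat.prime_two).mpr hK2).symm
    have c3' : Nat.Coprime K 3 := ((Nat.Prime.coprime_iff_not_dvd Nat.prime_three).mpr hK3).symm
    rw [show (6:ℕ) = 2 * 3 from rfl]
    exact Nat.Coprime.mul_right c2 c3'
  obtain ⟨hR0, hBR, hRiff⟩ := RB K hK6
  have hiff2 : (∃ x y : ℤ, x ^ 2 + y ^ 2 = (n : ℤ)) ↔ (∃ x y : ℕ, m = x ^ 2 + y ^ 2) := by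
    calc (∃ x y : ℤ, x ^ 2 + y ^ 2 = (n : ℤ))
        ↔ (∃ x y : ℤ, x ^ 2 + y ^ 2 = ((2 ^ a * m : ℕ) : ℤ)) := by rw [hm]
      _ ↔ (∃ x y : ℤ, x ^ 2 + y ^ 2 = (m : ℤ)) := sq2_pow2 a m
      _ ↔ _ := sq2_nat m
  have hmsq : (∃ x y : ℕ, m = x ^ 2 + y ^ 2) ↔
      (∀ q : ℕ, q.Prime → q % 4 = 3 → Even (m.factorization q)) := by
    rw [Nat.eq_sq_add_sq_iff]
    constructor
    · intro H q hq hq4; rw [Nat.factorization_def m hq]; by_cases hqm : q ∣ m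
      · exact H q (Nat.mem_primeFactors.mpr ⟨hq, hqm, hm0⟩) hq4
      · rw [padicValNat.eq_zero_of_not_dvd hqm]; exact Even.zero
    · intro H q hq hq4; have hqp := Nat.prime_of_mem_primeFactors hq
      rw [← Nat.factorization_def m hqp]; exact H q hqp hq4
  have hE : ((2 : ZMod 3)) ^ (a + 1) ≠ 0 := pow_ne_zero _ (by decide)
  have hSiff : a6 n = 0 ↔ Sf ((2 : ZMod 3) ^ (a + 1)) m = 0 := by
    rw [a6_eq n hn0, ← hmdef, ← ha]
    by_cases h : a = 0
    · rw [if_pos h]; simp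
    · rw [if_neg h]; simp
  rw [hSiff, hiff2, hmsq]
  rcases Nat.even_or_odd b with hbe | hbo
  · by_cases hb0 : b = 0
    · have hmk : K = m := by rw [← hmK, hb0, pow_zero, one_mul]
      have h2S := S_case0 K hK3 hK0 _ hE
      have hc3e := c3_unit _ hE
      have hSiff2 : Sf ((2 : ZMod 3) ^ (a + 1)) K = 0 ↔ Rf K = 0 := by
        rcases hBR with h | h <;> rcases hc3e with h' | h' <;> rw [h, h'] at h2S <;>
          constructor <;> intro hh <;> omega
      rw [← hmk, hSiff2]
      constructor
      · intro h0 hall; exact (hRiff.mpr hall) h0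
      · intro hnall; by_contra hne; exact hnall (hRiff.mp hne)
    · have hS := S_pos b K (by omega) hK3 hK0 _ hE
      rw [← hmK, hS, if_pos hbe]
      have hfa : ∀ q : ℕ, q.Prime → q % 4 = 3 →
          (Even ((3 ^ b * K).factorization q) ↔ Even (K.factorization q)) := by
        intro q hq hq4
        rw [Nat.factorization_mul (by positivity) hK0, Finsupp.add_apply]
        have h3f : ((3 ^ b : ℕ)).factorization q = if q = 3 then b else 0 := by
          rw [Nat.Prime.factorization_pow Nat.prime_three, Finsupp.single_apply]
          simp [eq_comm]
        by_cases hq3 : q = 3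
        · have hKf : K.factorization q = 0 :=
            Nat.factorization_eq_zero_of_not_dvd (by rw [hq3]; exact hK3)
          rw [h3f, if_pos hq3, hKf, add_zero]
          exact iff_of_true hbe Even.zero
        · rw [h3f, if_neg hq3, zero_add]
      constructor
      · intro h0 hall
        have hrz : Rf K = 0 := by omega
        exact (hRiff.mpr (fun q hq hq4 => (hfa q hq hq4).mp (hall q hq hq4))) hrz
      · intro hnall
        by_contra h4R
        have hRne : Rf K ≠ 0 := fun h => h4R (by rw [h, mul_zero])
        exact hnall fun q hq hq4 => (hfa q hq hq4).mpr (hRiff.mp hRne q hq hq4)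
  · have hS := S_pos b K (by rcases hbo with ⟨t, ht⟩; omega) hK3 hK0 _ hE
    rw [← hmK, hS, if_neg (Nat.not_even_iff_odd.mpr hbo)]
    refine iff_of_true (zero_mul _) ?_
    intro hall
    have hodd3 := hall 3 Nat.prime_three (by norm_num)
    rw [Nat.factorization_mul (by positivity) hK0, Finsupp.add_apply] at hodd3
    have h3b : ((3 ^ b : ℕ)).factorization 3 = b := by
      rw [Nat.Prime.factorization_pow Nat.prime_three, Finsupp.single_apply]; simp
    have hKf : K.factorization 3 = 0 := Nat.factorization_eq_zero_of_not_dvd hK3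
    rw [h3b, hKf, add_zero] at hodd3
    exact (Nat.not_even_iff_odd.mpr hbo) hodd3
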